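/- A finite graph G = (V, E) is a long-refinement graph if and only if its edge complement G' = (V, E') is a long-refinement graph, where E' consists of all pairs {u,v} of distinct vertices with {u,v} ∉ E. Moreover, for every i ∈ ℕ, the Colour Refinement partitions satisfy π^i_G = π^i_{G'}. -/
import Mathlib


variable {V : Type*}

/-- Colour Refinement equivalence: `crRel G i u v` means `u` and `v` get the same colour
after `i` iterations of Colour Refinement on `G` (starting monochromatic). -/
def crRel (G : SimpleGraph V) : ℕ → V → V → Prop
  | 0 => fun _ _ => True
  | (i+1) => fun u v => crRel G i u v ∧ ∀ w : V,
      Nat.card {x : V // G.Adj u x ∧ crRel G i x w} =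
      Nat.card {x : V // G.Adj v x ∧ crRel G i x w}

/-- The colour class of `v` after `i` iterations. -/
def crClass (G : SimpleGraph V) (i : ℕ) (v : V) : Set V :=
  {u : V | crRel G i u v}

/-- The partition `π^i` induced by the colouring after `i` iterations. -/
def crPartition (G : SimpleGraph V) (i : ℕ) : Set (Set V) :=
  {C : Set V | ∃ v : V, C = crClass G i v}

/-- `G` is a long-refinement graph: Colour Refinement takes exactly `n - 1` iterations
to stabilise. -/
def IsLongRefinement [Fintype V] (G : SimpleGraph V) : Prop :=
  (∀ i < Fintype.card V - 1, crPartition G (i+1) ≠ crPartition G i) ∧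
  crPartition G (Fintype.card V) = crPartition G (Fintype.card V - 1)

/-- The degree of a vertex. -/
noncomputable def vdeg (G : SimpleGraph V) (v : V) : ℕ :=
  Nat.card {u : V // G.Adj v u}

/-- `degOn G C C' k` : every vertex of `C` has exactly `k` neighbours in `C'`,
i.e. `deg_{C'}(C) = k`. -/
def degOn (G : SimpleGraph V) (C C' : Set V) (k : ℕ) : Prop :=
  ∀ v ∈ C, Nat.card {x : V // x ∈ C' ∧ G.Adj v x} = k

/-- `C` is balanced with respect to `C'`: `deg_{C'}(C)` is defined. -/
def BalancedWrt (G : SimpleGraph V) (C C' : Set V) : Prop :=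
  ∃ k, degOn G C C' k

lemma crRel_refl (G : SimpleGraph V) : ∀ i v, crRel G i v v := by
  intro i
  induction i with
  | zero => intro v; trivial
  | succ i ih => intro v; exact ⟨ih v, fun _ => rfl⟩

lemma crRel_symm (G : SimpleGraph V) : ∀ i {u v}, crRel G i u v → crRel G i v u := by
  intro i
  induction i with
  | zero => intro u v _; trivial
  | succ i ih => intro u v h; exact ⟨ih h.1, fun w => (h.2 w).symm⟩

lemma crRel_trans (G : SimpleGraph V) :
    ∀ i {u v w}, crRel G i u v → crRel G i v w → crRel G i u w := by
  intro i
  induction i with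
  | zero => intro u v w _ _; trivial
  | succ i ih =>
    intro u v w h h'
    exact ⟨ih h.1 h'.1, fun z => (h.2 z).trans (h'.2 z)⟩

lemma crRel_congr {G : SimpleGraph V} {i : ℕ} {u v : V} (h : crRel G i u v) (w : V) :
    crRel G i u w ↔ crRel G i v w :=
  ⟨fun h' => crRel_trans G i (crRel_symm G i h) h', fun h' => crRel_trans G i h h'⟩

lemma card_congr_pred {p q : V → Prop} (h : ∀ x, p x ↔ q x) :
    Nat.card {x // p x} = Nat.card {x // q x} :=
  Nat.card_congr (Equiv.subtypeEquivRight h)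

open Classical in
lemma card_split [Fintype V] (G : SimpleGraph V) (R : V → Prop) (u : V) :
    Nat.card {x // R x} =
      Nat.card {x // G.Adj u x ∧ R x} + Nat.card {x // Gᶜ.Adj u x ∧ R x}
        + (if R u then 1 else 0) := by
  classical
  have hc : ∀ p : V → Prop, Nat.card {x // p x} = (Finset.univ.filter p).card := by
    intro p
    rw [Nat.card_eq_fintype_card, Fintype.card_subtype]
  rw [hc, hc, hc]
  have hsingle : (Finset.univ.filter (fun x => x = u ∧ R x)).card =
      (if R u then 1 else 0) := by
    by_cases hr : R u
    · rw [if_pos hr]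
      have : (Finset.univ.filter (fun x => x = u ∧ R x)) = {u} := by
        ext x; simp only [Finset.mem_filter, Finset.mem_univ, true_and, Finset.mem_singleton]
        constructor
        · rintro ⟨rfl, _⟩; rfl
        · rintro rfl; exact ⟨rfl, hr⟩
      rw [this, Finset.card_singleton]
    · rw [if_neg hr]
      have : (Finset.univ.filter (fun x => x = u ∧ R x)) = ∅ := by
        ext x; simp only [Finset.mem_filter, Finset.mem_univ, true_and,
          Finset.notMem_empty, iff_false]
        rintro ⟨rfl, hx⟩; exact hr hx
      rw [this, Finset.card_empty]
  rw [← hsingle]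
  have hunion : Finset.univ.filter (fun x => R x) =
      (Finset.univ.filter (fun x => G.Adj u x ∧ R x)) ∪
      ((Finset.univ.filter (fun x => Gᶜ.Adj u x ∧ R x)) ∪
        (Finset.univ.filter (fun x => x = u ∧ R x))) := by
    ext x
    simp only [Finset.mem_filter, Finset.mem_univ, true_and, Finset.mem_union,
      SimpleGraph.compl_adj]
    constructor
    · intro hx
      by_cases hxu : x = u
      · exact Or.inr (Or.inr ⟨hxu, hx⟩)
      · by_cases ha : G.Adj u x
        · exact Or.inl ⟨ha, hx⟩
        · exact Or.inr (Or.inl ⟨⟨fun h => hxu h.symm, ha⟩, hx⟩)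
    · rintro (⟨_, hx⟩ | ⟨_, hx⟩ | ⟨_, hx⟩) <;> exact hx
  have hd1 : Disjoint (Finset.univ.filter (fun x => Gᶜ.Adj u x ∧ R x))
      (Finset.univ.filter (fun x => x = u ∧ R x)) := by
    rw [Finset.disjoint_left]
    intro x hx hx'
    simp only [Finset.mem_filter, Finset.mem_univ, true_and, SimpleGraph.compl_adj] at hx hx'
    rcases hx' with ⟨rfl, _⟩
    exact hx.1.1 rfl
  have hd2 : Disjoint (Finset.univ.filter (fun x => G.Adj u x ∧ R x))
      ((Finset.univ.filter (fun x => Gᶜ.Adj u x ∧ R x)) ∪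
        (Finset.univ.filter (fun x => x = u ∧ R x))) := by
    rw [Finset.disjoint_left]
    intro x hx hx'
    simp only [Finset.mem_filter, Finset.mem_univ, true_and, Finset.mem_union,
      SimpleGraph.compl_adj] at hx hx'
    rcases hx' with ⟨⟨_, ha⟩, _⟩ | ⟨rfl, _⟩
    · exact ha hx.1
    · exact G.irrefl hx.1
  rw [hunion, Finset.card_union_of_disjoint hd2, Finset.card_union_of_disjoint hd1]
  rw [← Nat.add_assoc]
  congr

open Classical in
lemma crRel_compl_mp [Fintype V] (G : SimpleGraph V) {i : ℕ}
    (IH : ∀ a b, crRel G i a b ↔ crRel Gᶜ i a b) {u v : V}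
    (h : crRel G (i+1) u v) : crRel Gᶜ (i+1) u v := by
  obtain ⟨h1, h2⟩ := h
  refine ⟨(IH u v).mp h1, fun w => ?_⟩
  have g1 : Nat.card {x // Gᶜ.Adj u x ∧ crRel Gᶜ i x w} =
      Nat.card {x // Gᶜ.Adj u x ∧ crRel G i x w} :=
    card_congr_pred fun x => and_congr_right fun _ => (IH x w).symm
  have g2 : Nat.card {x // Gᶜ.Adj v x ∧ crRel Gᶜ i x w} =
      Nat.card {x // Gᶜ.Adj v x ∧ crRel G i x w} :=
    card_congr_pred fun x => and_congr_right fun _ => (IH x w).symm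
  rw [g1, g2]
  have hu := card_split G (fun x => crRel G i x w) u
  have hv := card_split G (fun x => crRel G i x w) v
  have hadj := h2 w
  have he : (if crRel G i u w then 1 else 0) = (if crRel G i v w then 1 else 0) := by
    by_cases hw : crRel G i u w
    · rw [if_pos hw, if_pos ((crRel_congr h1 w).mp hw)]
    · rw [if_neg hw, if_neg (fun h' => hw ((crRel_congr h1 w).mpr h'))]
  simp only [he] at hu
  omega

lemma crRel_compl [Fintype V] (G : SimpleGraph V) :
    ∀ i (u v : V), crRel G i u v ↔ crRel Gᶜ i u v := by
  intro i
  induction i with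
  | zero => intro u v; exact ⟨fun _ => trivial, fun _ => trivial⟩
  | succ i ih =>
    intro u v
    constructor
    · exact crRel_compl_mp G ih
    · intro h
      have hcc : Gᶜᶜ = G := compl_compl G
      have IH' : ∀ a b, crRel Gᶜ i a b ↔ crRel Gᶜᶜ i a b := by
        intro a b; rw [hcc]; exact (ih a b).symm
      have := crRel_compl_mp Gᶜ IH' h
      rwa [hcc] at this

/-- A graph is a long-refinement graph iff its edge complement is; moreover the
Colour Refinement partitions of a graph and its complement coincide at every
iteration. -/
theorem longRefinement_compl [Fintype V] (G : SimpleGraph V) :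
    (IsLongRefinement G ↔ IsLongRefinement Gᶜ) ∧
      ∀ i : ℕ, crPartition G i = crPartition Gᶜ i := by
  have hclass : ∀ i (v : V), crClass G i v = crClass Gᶜ i v := by
    intro i v
    ext u
    exact crRel_compl G i u v
  have hpart : ∀ i, crPartition G i = crPartition Gᶜ i := by
    intro i
    ext C
    constructor
    · rintro ⟨v, rfl⟩; exact ⟨v, by rw [hclass i v]⟩
    · rintro ⟨v, rfl⟩; exact ⟨v, by rw [hclass i v]⟩
  refine ⟨?_, hpart⟩
  unfold IsLongRefinement
  simp only [hpart]
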